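/- arXiv:2111.05975 — 2 statements merged into one kernel-verified Lean document; each statement's English description precedes it below -/
import Mathlib

section
/- A subset B of a metric space (X,d) is Bourbaki-bounded in X if and only if every sequence in B is cofinally Bourbaki-Cauchy in X. -/
open Metric Filter Set

/-- Iterated chain-ball: `chainBall x eps m` is the set of points joinable to `x`
by a chain of `m + 1` steps each of length `< eps`; `chainBall x eps 0` is the open
ball (corresponding to `B^1`), and `chainBall x eps m` corresponds to `B^(m+1)`. -/
def chainBall {X : Type*} [PseudoMetricSpace X] (x : X) (eps : Real) : Nat -> Set X
  | 0 => Metric.ball x eps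
  | m + 1 => Set.iUnion fun y : X => Set.iUnion fun _ : y ∈ chainBall x eps m => Metric.ball y eps

/-- `B` is Bourbaki-bounded in `X`. -/
def IsBourbakiBounded {X : Type*} [PseudoMetricSpace X] (B : Set X) : Prop :=
  ∀ ε > (0 : ℝ), ∃ m : ℕ, ∃ s : Finset X, B ⊆ ⋃ x ∈ s, chainBall x ε m

/-- A sequence is Bourbaki-Cauchy in `X`. -/
def BourbakiCauchySeq {X : Type*} [PseudoMetricSpace X] (u : ℕ → X) : Prop :=
  ∀ ε > (0 : ℝ), ∃ m n₀ : ℕ, ∃ p : X, ∀ n ≥ n₀, u n ∈ chainBall p ε m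

/-- A sequence is cofinally Bourbaki-Cauchy in `X`. -/
def CofinallyBourbakiCauchySeq {X : Type*} [PseudoMetricSpace X] (u : ℕ → X) : Prop :=
  ∀ ε > (0 : ℝ), ∃ m : ℕ, ∃ p : X, ∀ n : ℕ, ∃ k ≥ n, u k ∈ chainBall p ε m

lemma mem_chainBall_succ {X : Type*} [PseudoMetricSpace X] {x y : X} {ε : ℝ} {m : ℕ} :
    y ∈ chainBall x ε (m + 1) ↔ ∃ z, z ∈ chainBall x ε m ∧ dist y z < ε := by
  simp [chainBall, Metric.mem_ball]

lemma chainBall_mono {X : Type*} [PseudoMetricSpace X] (x : X) {ε : ℝ} (hε : 0 < ε)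
    {m m' : ℕ} (h : m ≤ m') : chainBall x ε m ⊆ chainBall x ε m' := by
  induction h with
  | refl => exact subset_rfl
  | step h ih =>
    refine ih.trans ?_
    intro y hy
    exact mem_chainBall_succ.2 ⟨y, hy, by simpa using hε⟩

lemma chainBall_prepend {X : Type*} [PseudoMetricSpace X] {x x' : X} {ε : ℝ}
    (hd : dist x' x < ε) (m : ℕ) : chainBall x' ε m ⊆ chainBall x ε (m + 1) := by
  induction m with
  | zero =>
    intro y hy
    exact mem_chainBall_succ.2 ⟨x', by simpa [chainBall, Metric.mem_ball] using hd, by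
      simpa [chainBall, Metric.mem_ball] using hy⟩
  | succ m ih =>
    intro y hy
    obtain ⟨z, hz, hzy⟩ := mem_chainBall_succ.1 hy
    exact mem_chainBall_succ.2 ⟨z, ih hz, hzy⟩

lemma chainBall_symm {X : Type*} [PseudoMetricSpace X] {x y : X} {ε : ℝ} {m : ℕ}
    (h : y ∈ chainBall x ε m) : x ∈ chainBall y ε m := by
  induction m generalizing y with
  | zero => simpa [chainBall, Metric.mem_ball, dist_comm] using h
  | succ m ih =>
    obtain ⟨z, hz, hzy⟩ := mem_chainBall_succ.1 h
    exact chainBall_prepend (by simpa [dist_comm] using hzy) m (ih hz)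

lemma chainBall_trans {X : Type*} [PseudoMetricSpace X] {x y z : X} {ε : ℝ} {m m' : ℕ}
    (h1 : y ∈ chainBall x ε m) (h2 : z ∈ chainBall y ε m') :
    z ∈ chainBall x ε (m + m' + 1) := by
  induction m' generalizing z with
  | zero =>
    exact mem_chainBall_succ.2 ⟨y, h1, by simpa [chainBall, Metric.mem_ball] using h2⟩
  | succ m' ih =>
    obtain ⟨w, hw, hwz⟩ := mem_chainBall_succ.1 h2
    exact mem_chainBall_succ.2 ⟨w, ih hw, hwz⟩

/-- A subset of a metric space is Bourbaki-bounded iff every sequence in it is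
cofinally Bourbaki-Cauchy. -/
theorem isBourbakiBounded_iff_cofinallyBourbakiCauchy (X : Type*) [MetricSpace X]
    (B : Set X) :
    IsBourbakiBounded B ↔
      ∀ u : ℕ → X, (∀ n, u n ∈ B) → CofinallyBourbakiCauchySeq u := by
  constructor
  · intro h u hu ε hε
    obtain ⟨m, s, hs⟩ := h ε hε
    have hmem : ∀ n, ∃ x ∈ s, u n ∈ chainBall x ε m := by
      intro n
      simpa using hs (hu n)
    choose f hf1 hf2 using hmem
    obtain ⟨⟨p, hp⟩, hinf'⟩ := Finite.exists_infinite_fiber (fun n => (⟨f n, hf1 n⟩ : s))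
    have hinf := Set.infinite_coe_iff.1 hinf'
    refine ⟨m, p, fun n => ?_⟩
    obtain ⟨k, hk, hkn⟩ := hinf.exists_gt n
    have : f k = p := by simpa using hk
    exact ⟨k, hkn.le, this ▸ hf2 k⟩
  · intro h
    classical
    by_contra hB
    simp only [IsBourbakiBounded, not_forall, not_exists] at hB
    obtain ⟨ε, hε, hbad⟩ := hB
    have hbad' : ∀ (m : ℕ) (s : Finset X), ∃ b ∈ B, b ∉ ⋃ x ∈ s, chainBall x ε m := by
      intro m s
      have := hbad m s
      rw [Set.not_subset] at this
      exact this
    choose g hg1 hg2 using hbad'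
    -- build the list of chosen points
    let w : ℕ → List X := fun n => Nat.rec [g 0 ∅] (fun n L => g n L.toFinset :: L) n
    let u : ℕ → X := fun n => (w n).headD (g 0 ∅)
    have hw0 : w 0 = [g 0 ∅] := rfl
    have hwsucc : ∀ n, w (n + 1) = g n (w n).toFinset :: w n := fun n => rfl
    have hu0 : u 0 = g 0 ∅ := rfl
    have husucc : ∀ n, u (n + 1) = g n (w n).toFinset := fun n => rfl
    have huB : ∀ n, u n ∈ B := by
      intro n
      cases n with
      | zero => exact hu0 ▸ hg1 0 ∅
      | succ n => exact husucc n ▸ hg1 n _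
    have hself : ∀ n, u n ∈ w n := by
      intro n
      cases n with
      | zero => rw [hu0, hw0]; exact List.mem_singleton.2 rfl
      | succ n => rw [husucc, hwsucc]; exact List.mem_cons_self
    have hmemw : ∀ i n, i ≤ n → u i ∈ w n := by
      intro i n hin
      induction n with
      | zero => exact Nat.le_zero.1 hin ▸ hself 0
      | succ n ih =>
        rcases Nat.lt_or_ge i (n + 1) with h' | h'
        · rw [hwsucc]
          exact List.mem_cons_of_mem _ (ih (Nat.lt_succ_iff.1 h'))
        · have : i = n + 1 := le_antisymm hin h'
          rw [this]; exact hself (n + 1)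
    have havoid : ∀ i n, i ≤ n → u (n + 1) ∉ chainBall (u i) ε n := by
      intro i n hin hmem
      apply hg2 n (w n).toFinset
      rw [← husucc n] at *
      have hui : u i ∈ ((w n).toFinset : Set X) := by
        rw [Finset.mem_coe, List.mem_toFinset]; exact hmemw i n hin
      exact Set.mem_biUnion hui hmem
    obtain ⟨m, p, hp⟩ := h u huB ε hε
    obtain ⟨k1, -, hk1⟩ := hp 0
    obtain ⟨k2, hk2ge, hk2⟩ := hp (max (k1 + 1) (2 * m + 2))
    obtain ⟨n, rfl⟩ : ∃ n, k2 = n + 1 :=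
      ⟨k2 - 1, by omega⟩
    have hnk1 : k1 ≤ n := by
      have := le_trans (le_max_left (k1 + 1) (2 * m + 2)) hk2ge
      omega
    have hn2m : 2 * m + 1 ≤ n := by
      have := le_trans (le_max_right (k1 + 1) (2 * m + 2)) hk2ge
      omega
    have hchain : u (n + 1) ∈ chainBall (u k1) ε (m + m + 1) :=
      chainBall_trans (chainBall_symm hk1) hk2
    exact havoid k1 n hnk1
      (chainBall_mono _ hε (by omega : m + m + 1 ≤ n) hchain)
end

section
/- A metric space (X,d) is Bourbaki-complete if and only if every Bourbaki-Cauchy sequence in X has a cluster point (i.e. sequential Bourbaki-completeness is equivalent to Bourbaki-completeness in metric spaces). -/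
open Metric Filter Set Topology

/-- A metric space is (sequentially) Bourbaki-complete if every Bourbaki-Cauchy
sequence has a cluster point. -/
def IsBourbakiComplete (X : Type*) [PseudoMetricSpace X] : Prop :=
  ∀ u : ℕ → X, BourbakiCauchySeq u → ∃ x : X, MapClusterPt x atTop u

/-- A filter on a metric space is Bourbaki-Cauchy if for every `ε > 0` some chain-ball
belongs to the filter. -/
def BourbakiCauchyFilter {X : Type*} [PseudoMetricSpace X] (F : Filter X) : Prop :=
  ∀ ε > (0 : ℝ), ∃ m : ℕ, ∃ p : X, chainBall p ε m ∈ F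

lemma chainBall_mono_eps {X : Type*} [PseudoMetricSpace X] (x : X) {ε ε' : ℝ} (h : ε ≤ ε') :
    ∀ m, chainBall x ε m ⊆ chainBall x ε' m := by
  intro m
  induction m with
  | zero => exact Metric.ball_subset_ball h
  | succ m ih =>
    intro z hz
    simp only [chainBall, Set.mem_iUnion] at hz ⊢
    obtain ⟨y, hy, hzy⟩ := hz
    exact ⟨y, ih hy, Metric.ball_subset_ball h hzy⟩

lemma closure_chainBall_subset {X : Type*} [PseudoMetricSpace X] (x : X) {ε : ℝ} (hε : 0 < ε)
    (m : ℕ) : closure (chainBall x ε m) ⊆ chainBall x ε (m + 1) := by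
  intro z hz
  obtain ⟨y, hy, hd⟩ := (Metric.mem_closure_iff).1 hz ε hε
  simp only [chainBall, Set.mem_iUnion]
  exact ⟨y, hy, by simpa [Metric.mem_ball, dist_comm] using hd⟩

lemma clusterPt_mem_closure {X : Type*} [TopologicalSpace X] {u : ℕ → X} {x : X} {A : Set X}
    {n₀ : ℕ} (hu : ∀ n ≥ n₀, u n ∈ A) (hx : MapClusterPt x atTop u) : x ∈ closure A := by
  rw [mem_closure_iff_clusterPt]
  exact ClusterPt.mono hx (le_principal_iff.2 (eventually_atTop.2 ⟨n₀, hu⟩))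

/-- For metric spaces, Bourbaki-completeness (every Bourbaki-Cauchy filter clusters)
is equivalent to sequential Bourbaki-completeness. -/
theorem bourbakiComplete_iff_seq (X : Type*) [MetricSpace X] :
    (∀ F : Filter X, F.NeBot → BourbakiCauchyFilter F → ∃ x : X, ClusterPt x F) ↔
      IsBourbakiComplete X := by
  constructor
  · intro hfil u hu
    have hne : (map u atTop).NeBot := map_neBot
    have hbc : BourbakiCauchyFilter (map u atTop) := by
      intro ε hε
      obtain ⟨m, n₀, p, hp⟩ := hu ε hε
      exact ⟨m, p, eventually_atTop.2 ⟨n₀, hp⟩⟩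
    exact hfil (map u atTop) hne hbc
  · intro hseq F hne hF
    -- choose chain-balls in `F` of radius `1/(k+1)`
    have hch : ∀ k : ℕ, ∃ m : ℕ, ∃ p : X, chainBall p (1 / (k + 1)) m ∈ F := by
      intro k
      exact hF (1 / (k + 1)) (by positivity)
    choose m p hmp using hch
    set A : ℕ → Set X := fun k => ⋂ j ∈ Finset.range (k + 1), chainBall (p j) (1 / (j + 1)) (m j)
      with hA
    have hAF : ∀ k, A k ∈ F := by
      intro k
      exact (Filter.biInter_finset_mem _).2 fun j _ => hmp j
    have hAsub : ∀ k j, j ≤ k → A k ⊆ chainBall (p j) (1 / (j + 1)) (m j) := by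
      intro k j hjk
      exact Set.biInter_subset_of_mem (Finset.mem_range.2 (Nat.lt_succ_of_le hjk))
    -- any sequence through the `A k` (or their closures' chain-balls) is Bourbaki-Cauchy
    have key : ∀ z : ℕ → X, (∀ k, z k ∈ A k) → BourbakiCauchySeq z := by
      intro z hz ε hε
      obtain ⟨j, hj⟩ := exists_nat_one_div_lt hε
      refine ⟨m j, j, p j, fun n hn => ?_⟩
      exact chainBall_mono_eps _ hj.le _ (hAsub n j hn (hz n))
    -- cluster points of such sequences lie in `K`
    set K : Set X := ⋂ j : ℕ, closure (chainBall (p j) (1 / (j + 1)) (m j)) with hK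
    have hclK : ∀ (z : ℕ → X) (x : X), (∀ k, z k ∈ A k) → MapClusterPt x atTop z → x ∈ K := by
      intro z x hz hx
      refine Set.mem_iInter.2 fun j => ?_
      exact clusterPt_mem_closure (fun n hn => hAsub n j hn (hz n)) hx
    -- K is compact
    have hKseq : IsSeqCompact K := by
      intro y hy
      have hybc : BourbakiCauchySeq y := by
        intro ε hε
        obtain ⟨j, hj⟩ := exists_nat_one_div_lt hε
        refine ⟨m j + 1, 0, p j, fun n _ => ?_⟩
        have h1 : y n ∈ closure (chainBall (p j) (1 / (j + 1)) (m j)) :=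
          Set.mem_iInter.1 (hy n) j
        exact chainBall_mono_eps _ hj.le _
          (closure_chainBall_subset _ (by positivity) _ h1)
      obtain ⟨x, hx⟩ := hseq y hybc
      have hKcl : IsClosed K := isClosed_iInter fun j => isClosed_closure
      have hxK : x ∈ K :=
        hKcl.closure_subset (clusterPt_mem_closure (A := K) (n₀ := 0) (fun n _ => hy n) hx)
      obtain ⟨ψ, hψ, hψt⟩ := TopologicalSpace.FirstCountableTopology.tendsto_subseq hx
      exact ⟨x, hxK, ψ, hψ, hψt⟩
    have hKcomp : IsCompact K := hKseq.isCompact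
    -- conclude by contradiction
    by_contra hcon
    push_neg at hcon
    have hdisj : ∀ x ∈ K, Disjoint (𝓝 x) F := by
      intro x _
      have := hcon x
      rwa [ClusterPt, neBot_iff, not_not, ← disjoint_iff] at this
    have hdisj' : Disjoint (𝓝ˢ K) F := hKcomp.disjoint_nhdsSet_left.2 hdisj
    obtain ⟨U, hU, S, hS, hUS⟩ := Filter.disjoint_iff.1 hdisj'
    obtain ⟨V, hVopen, hKV, hVU⟩ := mem_nhdsSet_iff_exists.1 hU
    -- choose a sequence in `S ∩ A k`
    have hSA : ∀ k, (S ∩ A k).Nonempty := fun k =>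
      Filter.nonempty_of_mem (Filter.inter_mem hS (hAF k))
    choose z hzS hzA using fun k => (hSA k)
    obtain ⟨x, hx⟩ := hseq z (key z hzA)
    have hxK : x ∈ K := hclK z x hzA hx
    have hxS : x ∈ closure S := clusterPt_mem_closure (n₀ := 0) (fun n _ => hzS n) hx
    have hxV : x ∈ V := hKV hxK
    obtain ⟨y, hyV, hyS⟩ := mem_closure_iff.1 hxS V hVopen hxV
    exact Set.disjoint_left.1 hUS (hVU hyV) hyS
end
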